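/- Let g(h) = 1 + arctan(h). Define the PTVDRK3' angle update factor F(h) = (1/3)(1 + 2·(1/4)(3 + g(h)²)·g(h)). Then F(h) = 1 + h + h²/2 − h³/6 + O(h⁴), and hence e^h − F(h) = (1/6 − (−1/6)) h³ + O(h⁴) = h³/3 + O(h⁴); in particular the coefficient of h³ in F is −1/6 ≠ 1/6, so PTVDRK3' is only second-order accurate. -/

import Mathlib

/-- The PTVDRK3' angle-update factor on the circle for `θ' = θ`. -/
noncomputable def F (h : ℝ) : ℝ :=
  (1 / 3) * (1 + 2 * ((1 / 4) * (3 + (1 + Real.arctan h) ^ 2)) * (1 + Real.arctan h))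

lemma arctan_cubic_bound {h : ℝ} (hh : |h| ≤ 1) :
    |h - Real.arctan h - h ^ 3 / 3| ≤ h ^ 4 := by
  set f : ℝ → ℝ := fun t => t - Real.arctan t - t ^ 3 / 3 with hf
  set f' : ℝ → ℝ := fun t => 1 - 1 / (1 + t ^ 2) - t ^ 2 with hf'
  have key : ‖f h - f 0‖ ≤ h ^ 4 * ‖h - (0:ℝ)‖ := by
    apply Convex.norm_image_sub_le_of_norm_hasDerivWithin_le
      (f := f) (f' := f') (s := Set.uIcc 0 h)
    · intro t ht
      exact (((hasDerivAt_id t).sub (Real.hasDerivAt_arctan t)).sub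
        (((hasDerivAt_pow 3 t).div_const 3).congr_deriv (by ring))).hasDerivWithinAt
    · intro t ht
      have h1 : 0 < 1 + t ^ 2 := by positivity
      have habs : |t| ≤ |h| := by
        rcases Set.mem_uIcc.1 ht with ⟨h0, h1'⟩ | ⟨h0, h1'⟩
        · rw [abs_of_nonneg h0]; exact h1'.trans (le_abs_self h)
        · rw [abs_of_nonpos h1']; exact (neg_le_neg h0).trans (neg_le_abs h)
      have ht2 : t ^ 2 ≤ h ^ 2 := by
        rw [← sq_abs t, ← sq_abs h]; exact pow_le_pow_left₀ (abs_nonneg t) habs 2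
      have : f' t = -(t ^ 4 / (1 + t ^ 2)) := by
        simp only [hf']; field_simp; ring
      rw [this, Real.norm_eq_abs, abs_neg, abs_of_nonneg (by positivity)]
      calc t ^ 4 / (1 + t ^ 2) ≤ t ^ 4 / 1 := by
            apply div_le_div_of_nonneg_left (by positivity) one_pos
            linarith [sq_nonneg t]
        _ = (t ^ 2) ^ 2 := by ring
        _ ≤ (h ^ 2) ^ 2 := pow_le_pow_left₀ (sq_nonneg t) ht2 2
        _ = h ^ 4 := by ring
    · exact convex_uIcc 0 h
    · exact Set.left_mem_uIcc
    · exact Set.right_mem_uIcc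
  simp only [hf, Real.arctan_zero, Real.norm_eq_abs] at key
  have : |h - Real.arctan h - h ^ 3 / 3| ≤ h ^ 4 * |h| := by
    convert key using 2 <;> ring_nf
  calc |h - Real.arctan h - h ^ 3 / 3| ≤ h ^ 4 * |h| := this
    _ ≤ h ^ 4 * 1 := by
        apply mul_le_mul_of_nonneg_left hh (by positivity)
    _ = h ^ 4 := mul_one _

lemma abs_arctan_le (h : ℝ) : |Real.arctan h| ≤ |h| := by
  have key : ‖Real.arctan h - Real.arctan 0‖ ≤ 1 * ‖h - (0:ℝ)‖ := by
    apply Convex.norm_image_sub_le_of_norm_hasDerivWithin_le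
      (f' := fun t => 1 / (1 + t ^ 2)) (s := Set.uIcc 0 h)
    · exact fun t _ => (Real.hasDerivAt_arctan t).hasDerivWithinAt
    · intro t _
      rw [Real.norm_eq_abs, abs_of_nonneg (by positivity)]
      rw [div_le_one (by positivity)]; linarith [sq_nonneg t]
    · exact convex_uIcc 0 h
    · exact Set.left_mem_uIcc
    · exact Set.right_mem_uIcc
  simpa [Real.arctan_zero] using key

theorem stmt_15 :
    ∃ C > (0:ℝ), ∃ δ > (0:ℝ), ∀ h : ℝ, |h| ≤ δ →
      |Real.exp h - F h - h ^ 3 / 3| ≤ C * h ^ 4 := by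
  refine ⟨4, by norm_num, 1, by norm_num, fun h hh => ?_⟩
  set a := Real.arctan h with ha
  have hFa : F h = 1 + a + a ^ 2 / 2 + a ^ 3 / 6 := by
    simp only [F, ha]; ring
  have hah : |a| ≤ |h| := abs_arctan_le h
  have hh4 : (0:ℝ) ≤ h ^ 4 := by positivity
  -- exp bound
  have hexp : |Real.exp h - (1 + h + h ^ 2 / 2 + h ^ 3 / 6)| ≤ h ^ 4 := by
    have := Real.exp_bound hh (n := 4) (by norm_num)
    have hsum : ∑ m ∈ Finset.range 4, h ^ m / m.factorial
        = 1 + h + h ^ 2 / 2 + h ^ 3 / 6 := by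
      norm_num [Finset.sum_range_succ, Nat.factorial]
    rw [hsum] at this
    calc |Real.exp h - (1 + h + h ^ 2 / 2 + h ^ 3 / 6)|
        ≤ |h| ^ 4 * (5 / (24 * 4)) := by exact_mod_cast this
      _ ≤ |h| ^ 4 * 1 := by
          apply mul_le_mul_of_nonneg_left (by norm_num) (by positivity)
      _ = h ^ 4 := by rw [mul_one, ← abs_pow, abs_of_nonneg hh4]
  -- d = h - a
  have hd3 : |h - a - h ^ 3 / 3| ≤ h ^ 4 := arctan_cubic_bound hh
  have hd : |h - a| ≤ h ^ 4 + |h| ^ 3 / 3 := by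
    have : |h - a| ≤ |h - a - h ^ 3 / 3| + |h ^ 3 / 3| := by
      calc |h - a| = |(h - a - h ^ 3 / 3) + h ^ 3 / 3| := by ring_nf
        _ ≤ _ := abs_add_le _ _
    refine this.trans ?_
    have : |h ^ 3 / 3| = |h| ^ 3 / 3 := by rw [abs_div, abs_pow]; norm_num
    linarith [hd3]
  have hdle : |h - a| ≤ (4 / 3) * |h| ^ 3 := by
    have h4 : h ^ 4 ≤ |h| ^ 3 := by
      rw [← abs_of_nonneg hh4, abs_pow]
      calc |h| ^ 4 = |h| ^ 3 * |h| := by ring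
        _ ≤ |h| ^ 3 * 1 := by
            apply mul_le_mul_of_nonneg_left hh (by positivity)
        _ = |h| ^ 3 := mul_one _
    linarith [hd]
  have hh3 : |h| ^ 3 * |h| = h ^ 4 := by
    rw [show |h| ^ 3 * |h| = |h| ^ 4 by ring, ← abs_pow, abs_of_nonneg hh4]
  -- quadratic term
  have hsq : |(h ^ 2 - a ^ 2) / 2| ≤ (4 / 3) * h ^ 4 := by
    have : (h ^ 2 - a ^ 2) / 2 = (h - a) * ((h + a) / 2) := by ring
    rw [this, abs_mul]
    have h2 : |(h + a) / 2| ≤ |h| := by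
      rw [abs_div]
      have := abs_add_le h a
      have : |h + a| ≤ 2 * |h| := by linarith [hah, abs_add_le h a]
      rw [abs_of_pos (by norm_num : (0:ℝ) < 2)] at *
      linarith
    calc |h - a| * |(h + a) / 2| ≤ ((4 / 3) * |h| ^ 3) * |h| :=
          mul_le_mul hdle h2 (abs_nonneg _) (by positivity)
      _ = (4 / 3) * h ^ 4 := by rw [mul_assoc, hh3]
  -- cubic term
  have hcube : |(h ^ 3 - a ^ 3) / 6| ≤ (2 / 3) * h ^ 4 := by
    have heq : (h ^ 3 - a ^ 3) / 6 = (h - a) * ((h ^ 2 + h * a + a ^ 2) / 6) := by ring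
    rw [heq, abs_mul]
    have hb : |(h ^ 2 + h * a + a ^ 2) / 6| ≤ (1 / 2) * |h| := by
      rw [abs_div, abs_of_pos (by norm_num : (0:ℝ) < 6)]
      have h1 : |h ^ 2 + h * a + a ^ 2| ≤ 3 * h ^ 2 := by
        have e1 : |h * a| ≤ h ^ 2 := by
          rw [abs_mul]
          calc |h| * |a| ≤ |h| * |h| := mul_le_mul_of_nonneg_left hah (abs_nonneg _)
            _ = h ^ 2 := by rw [← abs_mul, ← sq, abs_of_nonneg (sq_nonneg h)]
        have e2 : a ^ 2 ≤ h ^ 2 := by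
          rw [← sq_abs a, ← sq_abs h]; exact pow_le_pow_left₀ (abs_nonneg a) hah 2
        calc |h ^ 2 + h * a + a ^ 2| ≤ |h ^ 2| + |h * a| + |a ^ 2| := by
              exact (abs_add_le _ _).trans (by linarith [abs_add_le (h^2) (h*a)])
          _ ≤ 3 * h ^ 2 := by
              rw [abs_of_nonneg (sq_nonneg h), abs_of_nonneg (sq_nonneg a)]; linarith
      have h2 : h ^ 2 ≤ |h| := by
        rw [← sq_abs h]
        calc |h| ^ 2 = |h| * |h| := sq |h|
          _ ≤ 1 * |h| := mul_le_mul_of_nonneg_right hh (abs_nonneg h)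
          _ = |h| := one_mul _
      linarith
    calc |h - a| * |(h ^ 2 + h * a + a ^ 2) / 6|
        ≤ ((4 / 3) * |h| ^ 3) * ((1 / 2) * |h|) :=
          mul_le_mul hdle hb (abs_nonneg _) (by positivity)
      _ = (2 / 3) * (|h| ^ 3 * |h|) := by ring
      _ = (2 / 3) * h ^ 4 := by rw [hh3]
  -- assemble
  have hdecomp : Real.exp h - F h - h ^ 3 / 3
      = (Real.exp h - (1 + h + h ^ 2 / 2 + h ^ 3 / 6))
        + (h - a - h ^ 3 / 3) + (h ^ 2 - a ^ 2) / 2 + (h ^ 3 - a ^ 3) / 6 := by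
    rw [hFa]; ring
  rw [hdecomp]
  calc |_ + _ + _ + _| ≤ |(Real.exp h - (1 + h + h ^ 2 / 2 + h ^ 3 / 6))
        + (h - a - h ^ 3 / 3) + (h ^ 2 - a ^ 2) / 2| + |(h ^ 3 - a ^ 3) / 6| := abs_add_le _ _
    _ ≤ |(Real.exp h - (1 + h + h ^ 2 / 2 + h ^ 3 / 6))
        + (h - a - h ^ 3 / 3)| + |(h ^ 2 - a ^ 2) / 2| + |(h ^ 3 - a ^ 3) / 6| := by
          linarith [abs_add_le ((Real.exp h - (1 + h + h ^ 2 / 2 + h ^ 3 / 6))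
            + (h - a - h ^ 3 / 3)) ((h ^ 2 - a ^ 2) / 2)]
    _ ≤ |Real.exp h - (1 + h + h ^ 2 / 2 + h ^ 3 / 6)| + |h - a - h ^ 3 / 3|
        + |(h ^ 2 - a ^ 2) / 2| + |(h ^ 3 - a ^ 3) / 6| := by
          linarith [abs_add_le (Real.exp h - (1 + h + h ^ 2 / 2 + h ^ 3 / 6)) (h - a - h ^ 3 / 3)]
    _ ≤ h ^ 4 + h ^ 4 + (4 / 3) * h ^ 4 + (2 / 3) * h ^ 4 := by
          linarith [hexp, hd3, hsq, hcube]
    _ = 4 * h ^ 4 := by ring
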